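/- Let Λ be a symmetric positive semi-definite N×N matrix with rank N-1 and kernel span{r}, where r ∈ ℝ^N_{>0}, and let Σ = diag(r₁,...,r_N). Suppose at a point r* one has K = s_α (r*)^α componentwise with s_α = (Σᵢ K_i r*_i)/‖r*‖_{α+1}^{α+1}. If the smallest positive eigenvalue of Λ̃ = Σ^{(1-α)/2} Λ Σ^{(1-α)/2} exceeds α s_α, then the matrix Λ - α s_α (diag(r_i^{α-1}) - r^α(r^α)ᵀ/‖r‖_{α+1}^{α+1}) evaluated at r* is positive semi-definite with rank N-1 and kernel span{r*}. -/

import Mathlib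

open scoped BigOperators Matrix


lemma stmt13_quad_lb {n : ℕ} (A : Matrix (Fin n) (Fin n) ℝ) (hA : A.IsHermitian)
    (hAsym : Aᵀ = A) (t : ℝ) (v : Fin n → ℝ)
    (hkerA : ∀ x : Fin n → ℝ, A.mulVec x = 0 ↔ ∃ c : ℝ, x = c • v)
    (heig : ∀ (μ : ℝ) (x : Fin n → ℝ), x ≠ 0 → A.mulVec x = μ • x → μ ≠ 0 → t < μ)
    (w : Fin n → ℝ) (hwv : w ⬝ᵥ v = 0) (hw : w ≠ 0) :
    t * (w ⬝ᵥ w) < w ⬝ᵥ A.mulVec w := by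
  classical
  set u := hA.eigenvectorBasis with hu
  set μ := hA.eigenvalues with hμ
  set W : EuclideanSpace ℝ (Fin n) := (WithLp.equiv 2 (Fin n → ℝ)).symm w with hW
  set AW : EuclideanSpace ℝ (Fin n) := (WithLp.equiv 2 (Fin n → ℝ)).symm (A.mulVec w) with hAW
  have hIP : ∀ (x y : EuclideanSpace ℝ (Fin n)),
      (inner ℝ x y : ℝ) = (WithLp.equiv 2 (Fin n → ℝ)) x ⬝ᵥ (WithLp.equiv 2 (Fin n → ℝ)) y := by
    intro x y
    simp [PiLp.inner_apply, RCLike.inner_apply, dotProduct, WithLp.equiv_apply, mul_comm]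
  set c : Fin n → ℝ := fun i => (inner ℝ W (u i) : ℝ) with hc
  have P1 : ∑ i, c i * c i = w ⬝ᵥ w := by
    have h := u.sum_inner_mul_inner W W
    have h2 : ∀ i, (inner ℝ (u i) W : ℝ) = c i := fun i => real_inner_comm _ _
    simp only [h2] at h
    rw [hIP W W] at h
    simpa [hW, hc] using h
  have hudot : ∀ i, (WithLp.equiv 2 (Fin n → ℝ)) (u i) ⬝ᵥ w = c i := by
    intro i
    have h0 : c i = (inner ℝ W (u i) : ℝ) := rfl
    rw [h0, real_inner_comm, hIP (u i) W, hW, Equiv.apply_symm_apply]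
  have P2 : ∑ i, c i * (μ i * c i) = w ⬝ᵥ A.mulVec w := by
    have h := u.sum_inner_mul_inner W AW
    have h2 : ∀ i, (inner ℝ (u i) AW : ℝ) = μ i * c i := by
      intro i
      rw [hIP (u i) AW, hAW]
      rw [show (WithLp.equiv 2 (Fin n → ℝ)) ((WithLp.equiv 2 (Fin n → ℝ)).symm (A.mulVec w))
          = A.mulVec w from (WithLp.equiv 2 (Fin n → ℝ)).apply_symm_apply _]
      rw [Matrix.dotProduct_mulVec, ← Matrix.mulVec_transpose, hAsym]
      have := hA.mulVec_eigenvectorBasis i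
      rw [← hu, ← hμ] at this
      rw [show A.mulVec ((WithLp.equiv 2 (Fin n → ℝ)) (u i)) = μ i • ((WithLp.equiv 2 (Fin n → ℝ)) (u i)) from this]
      rw [smul_dotProduct, hudot i, smul_eq_mul]
    simp only [h2] at h
    rw [hIP W AW] at h
    have h3 : ∀ i, (inner ℝ W (u i) : ℝ) = c i := fun i => rfl
    simp only [h3] at h
    rw [hAW] at h
    simpa [hW] using h
  have P3 : ∀ i, μ i = 0 → c i = 0 := by
    intro i hi
    have := hA.mulVec_eigenvectorBasis i
    rw [← hu, ← hμ, hi, zero_smul] at this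
    obtain ⟨d, hd⟩ := (hkerA _).mp this
    rw [← hudot i, WithLp.equiv_apply, hd, smul_dotProduct, dotProduct_comm, hwv]
    simp
  have hww0 : (0:ℝ) ≤ w ⬝ᵥ w := Finset.sum_nonneg fun i _ => mul_self_nonneg (w i)
  have hueq : ∀ i, A.mulVec ((WithLp.equiv 2 (Fin n → ℝ)) (u i))
      = μ i • ((WithLp.equiv 2 (Fin n → ℝ)) (u i)) := fun i => hA.mulVec_eigenvectorBasis i
  have hune : ∀ i, ((WithLp.equiv 2 (Fin n → ℝ)) (u i)) ≠ (0 : Fin n → ℝ) := by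
    intro i h
    apply u.orthonormal.ne_zero i
    have := congrArg (WithLp.equiv 2 (Fin n → ℝ)).symm h
    simpa using this
  have hterm : ∀ i, c i ≠ 0 → t * (c i * c i) < c i * (μ i * c i) := by
    intro i hci
    have hμi : μ i ≠ 0 := fun h => hci (P3 i h)
    have ht : t < μ i := heig (μ i) _ (hune i) (hueq i) hμi
    have hc2 : 0 < c i * c i := mul_self_pos.mpr hci
    nlinarith
  have hex : ∃ i, c i ≠ 0 := by
    by_contra hall
    push_neg at hall
    apply hw
    apply dotProduct_self_eq_zero.mp
    rw [← P1]
    simp [hall]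
  obtain ⟨i0, hi0⟩ := hex
  have hsum : ∑ i, t * (c i * c i) < ∑ i, c i * (μ i * c i) := by
    apply Finset.sum_lt_sum
    · intro i _
      by_cases hci : c i = 0
      · simp [hci]
      · exact le_of_lt (hterm i hci)
    · exact ⟨i0, Finset.mem_univ i0, hterm i0 hi0⟩
  calc t * (w ⬝ᵥ w) = ∑ i, t * (c i * c i) := by rw [← P1, Finset.mul_sum]
    _ < ∑ i, c i * (μ i * c i) := hsum
    _ = w ⬝ᵥ A.mulVec w := P2

/-- Let `Λ` be symmetric PSD of rank `N-1` with kernel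
`span{r*}`, `r* > 0`, `Σ = diag(r*)`, and suppose `K = s_α (r*)^α` with
`s_α = (∑ᵢ Kᵢ r*ᵢ)/∑ᵢ (r*ᵢ)^{α+1}`. If every nonzero eigenvalue of
`Λ̃ = Σ^{(1-α)/2} Λ Σ^{(1-α)/2}` exceeds `α s_α`, then
`Λ - α s_α (diag(rᵢ^{α-1}) - r^α (r^α)ᵀ/‖r‖_{α+1}^{α+1})` at `r*` is PSD of
rank `N-1` with kernel `span{r*}`. -/
theorem stmt13 (N : ℕ) (hN : 0 < N) (α : ℝ)
    (Λ : Matrix (Fin N) (Fin N) ℝ) (r : Fin N → ℝ) (hr : ∀ i, 0 < r i)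
    (hΛ : Λ.PosSemidef) (hrank : Λ.rank = N - 1)
    (hker : ∀ x : Fin N → ℝ, Λ.mulVec x = 0 ↔ ∃ t : ℝ, x = t • r)
    (K : Fin N → ℝ) (s : ℝ)
    (hsdef : s = (∑ i, K i * r i) / (∑ i, r i ^ (α + 1)))
    (hconst : ∀ i, K i = s * r i ^ α)
    (Λt : Matrix (Fin N) (Fin N) ℝ)
    (hΛt : Λt = Matrix.diagonal (fun i => r i ^ ((1 - α) / 2)) * Λ *
      Matrix.diagonal (fun i => r i ^ ((1 - α) / 2)))
    (heig : ∀ (μ : ℝ) (x : Fin N → ℝ), x ≠ 0 → Λt.mulVec x = μ • x → μ ≠ 0 →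
      α * s < μ)
    (M : Matrix (Fin N) (Fin N) ℝ)
    (hM : M = Λ - (α * s) • (Matrix.diagonal (fun i => r i ^ (α - 1)) -
      (∑ i, r i ^ (α + 1))⁻¹ •
        Matrix.vecMulVec (fun i => r i ^ α) (fun i => r i ^ α))) :
    M.PosSemidef ∧ M.rank = N - 1 ∧
    (∀ x : Fin N → ℝ, M.mulVec x = 0 ↔ ∃ t : ℝ, x = t • r) := by
  clear hsdef hconst hrank
  have hNe : Nonempty (Fin N) := ⟨⟨0, hN⟩⟩
  set nv := ∑ i, r i ^ (α + 1) with hnvdef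
  set β := α * s with hβ
  set a : Fin N → ℝ := fun i => r i ^ ((1 - α) / 2) with hadef
  set b : Fin N → ℝ := fun i => r i ^ ((α - 1) / 2) with hbdef
  set v : Fin N → ℝ := fun i => r i ^ ((α + 1) / 2) with hvdef
  -- basic scalar facts
  have hrp : ∀ (i : Fin N) (c : ℝ), 0 < r i ^ c := fun i c => Real.rpow_pos_of_pos (hr i) c
  have hmul : ∀ (i : Fin N) (c d : ℝ), r i ^ c * r i ^ d = r i ^ (c + d) :=
    fun i c d => (Real.rpow_add (hr i) c d).symm
  have hba : ∀ i, b i * a i = 1 := fun i => by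
    simp only [hadef, hbdef, hmul i, show (α-1)/2 + (1-α)/2 = 0 by ring, Real.rpow_zero]
  have hab : ∀ i, a i * b i = 1 := fun i => by
    simp only [hadef, hbdef, hmul i, show (1-α)/2 + (α-1)/2 = 0 by ring, Real.rpow_zero]
  have hbv : ∀ i, b i * v i = r i ^ α := fun i => by
    simp only [hbdef, hvdef, hmul i, show (α-1)/2 + (α+1)/2 = α by ring]
  have hbb : ∀ i, b i * b i = r i ^ (α - 1) := fun i => by
    simp only [hbdef, hmul i, show (α-1)/2 + (α-1)/2 = α - 1 by ring]
  have hav : ∀ i, a i * v i = r i := fun i => by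
    simp only [hadef, hvdef, hmul i, show (1-α)/2 + (α+1)/2 = 1 by ring, Real.rpow_one]
  have hvv : ∀ i, v i * v i = r i ^ (α + 1) := fun i => by
    simp only [hvdef, hmul i, show (α+1)/2 + (α+1)/2 = α + 1 by ring]
  have hbr : ∀ i, b i * r i = v i := fun i => by
    conv_lhs => rw [← Real.rpow_one (r i)]
    simp only [hbdef, hvdef, hmul i, show (α-1)/2 + 1 = (α+1)/2 by ring]
  have hvvnv : v ⬝ᵥ v = nv := by
    simp only [dotProduct, hnvdef]
    exact Finset.sum_congr rfl fun i _ => hvv i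
  have hnv0 : 0 < nv := Finset.sum_pos (fun i _ => hrp i _) Finset.univ_nonempty
  have hΛr : Λ.mulVec r = 0 := (hker r).mpr ⟨1, (one_smul _ _).symm⟩
  -- symmetry facts
  have hΛsym : Λᵀ = Λ := by
    have := hΛ.1.eq
    rwa [Matrix.conjTranspose_eq_transpose_of_trivial] at this
  have hΛtH : Λt.IsHermitian := by
    rw [hΛt, show Matrix.diagonal a * Λ * Matrix.diagonal a
        = (Matrix.diagonal a)ᴴ * Λ * Matrix.diagonal a by
      rw [Matrix.conjTranspose_eq_transpose_of_trivial, Matrix.diagonal_transpose]]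
    exact Matrix.isHermitian_conjTranspose_mul_mul _ hΛ.1
  have hΛtsym : Λtᵀ = Λt := by
    have := hΛtH.eq
    rwa [Matrix.conjTranspose_eq_transpose_of_trivial] at this
  have hsymdot : ∀ x y : Fin N → ℝ, x ⬝ᵥ Λt.mulVec y = (Λt.mulVec x) ⬝ᵥ y := by
    intro x y
    rw [Matrix.dotProduct_mulVec, ← Matrix.mulVec_transpose, hΛtsym]
  -- kernel of Λt
  have hdSv : (Matrix.diagonal a).mulVec v = r := by
    funext i; simp [Matrix.mulVec_diagonal, hav i]
  have hΛtv : Λt.mulVec v = 0 := by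
    rw [hΛt, ← Matrix.mulVec_mulVec, hdSv, ← Matrix.mulVec_mulVec, hΛr, Matrix.mulVec_zero]
  have hkert : ∀ x : Fin N → ℝ, Λt.mulVec x = 0 ↔ ∃ t : ℝ, x = t • v := by
    intro x
    rw [hΛt, ← Matrix.mulVec_mulVec, ← Matrix.mulVec_mulVec]
    constructor
    · intro h
      have h0 : Λ.mulVec ((Matrix.diagonal a).mulVec x) = 0 := by
        funext i
        have := congrFun h i
        simp only [Matrix.mulVec_diagonal, Pi.zero_apply] at this ⊢
        rcases mul_eq_zero.mp this with h' | h'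
        · exact absurd h' (ne_of_gt (hrp i _))
        · exact h'
      obtain ⟨t, ht⟩ := (hker _).mp h0
      refine ⟨t, funext fun i => ?_⟩
      have := congrFun ht i
      simp only [Matrix.mulVec_diagonal, Pi.smul_apply, smul_eq_mul] at this ⊢
      have := congrArg (fun z => b i * z) this
      rw [← mul_assoc, hba i, one_mul] at this
      rw [this, ← mul_assoc, mul_comm (b i) t, mul_assoc, hbr i]
    · rintro ⟨t, rfl⟩
      have : (Matrix.diagonal a).mulVec (t • v) = t • r := by
        funext i
        simp only [Matrix.mulVec_diagonal, Pi.smul_apply, smul_eq_mul]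
        rw [← mul_assoc, mul_comm (a i) t, mul_assoc, hav i]
      rw [this, Matrix.mulVec_smul, hΛr, smul_zero, Matrix.mulVec_zero]
  -- vecMulVec action
  have hvmv : ∀ (p q x : Fin N → ℝ), (Matrix.vecMulVec p q).mulVec x = (q ⬝ᵥ x) • p := by
    intro p q x
    funext i
    show ∑ j, (p i * q j) * x j = (∑ j, q j * x j) * p i
    rw [Finset.sum_mul]
    exact Finset.sum_congr rfl fun j _ => by ring
  -- the congruent matrix B
  set B : Matrix (Fin N) (Fin N) ℝ :=
    Λt - β • ((1 : Matrix (Fin N) (Fin N) ℝ) - nv⁻¹ • Matrix.vecMulVec v v) with hBdef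
  have hBM : M = Matrix.diagonal b * B * Matrix.diagonal b := by
    ext i j
    simp only [hBdef, hM, hΛt, Matrix.diagonal_mul, Matrix.mul_diagonal, Matrix.sub_apply,
      Matrix.smul_apply, Matrix.one_apply, Matrix.diagonal_apply, Matrix.vecMulVec_apply,
      smul_eq_mul]
    by_cases h : i = j
    · subst h
      simp only [if_true]
      rw [show b i * (a i * Λ i i * a i - β * (1 - nv⁻¹ * (v i * v i))) * b i
          = ((b i * a i) * (b i * a i)) * Λ i i
            - β * ((b i * b i) - nv⁻¹ * ((b i * v i) * (b i * v i))) by ring,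
        hba i, hbb i, hbv i]
      ring
    · simp only [if_neg h]
      rw [show b i * (a i * Λ i j * a j - β * (0 - nv⁻¹ * (v i * v j))) * b j
          = ((b i * a i) * (b j * a j)) * Λ i j
            - β * (0 - nv⁻¹ * ((b i * v i) * (b j * v j))) by ring,
        hba i, hba j, hbv i, hbv j]
      ring
  -- quadratic form of B
  have hBform : ∀ z y : Fin N → ℝ,
      z ⬝ᵥ B.mulVec y = z ⬝ᵥ Λt.mulVec y - β * (z ⬝ᵥ y - nv⁻¹ * ((v ⬝ᵥ y) * (z ⬝ᵥ v))) := by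
    intro z y
    rw [hBdef, Matrix.sub_mulVec, Matrix.smul_mulVec, Matrix.sub_mulVec,
      Matrix.smul_mulVec, Matrix.one_mulVec, hvmv,
      dotProduct_sub, dotProduct_smul, dotProduct_sub,
      dotProduct_smul, dotProduct_smul]
    simp only [smul_eq_mul, dotProduct_comm z v]
  have hquad : ∀ (w : Fin N → ℝ) (c : ℝ), w ⬝ᵥ v = 0 →
      (w + c • v) ⬝ᵥ B.mulVec (w + c • v) = w ⬝ᵥ Λt.mulVec w - β * (w ⬝ᵥ w) := by
    intro w c hwv
    have hvw : v ⬝ᵥ w = 0 := by rwa [dotProduct_comm]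
    have hvz : ∀ z : Fin N → ℝ, v ⬝ᵥ Λt.mulVec z = 0 := by
      intro z; rw [hsymdot, hΛtv, zero_dotProduct]
    have hnvne : nv ≠ 0 := ne_of_gt hnv0
    rw [hBform, Matrix.mulVec_add, Matrix.mulVec_smul, hΛtv, smul_zero, add_zero,
      add_dotProduct, smul_dotProduct, hvz, smul_zero, add_zero]
    simp only [add_dotProduct, dotProduct_add, smul_dotProduct,
      dotProduct_smul, smul_eq_mul, hwv, hvw, hvvnv]
    field_simp
    ring
  have hkey : ∀ w : Fin N → ℝ, w ⬝ᵥ v = 0 → w ≠ 0 → β * (w ⬝ᵥ w) < w ⬝ᵥ Λt.mulVec w :=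
    fun w hwv hw => stmt13_quad_lb Λt hΛtH hΛtsym β v hkert heig w hwv hw
  have hdec : ∀ y : Fin N → ℝ, ∃ (w : Fin N → ℝ) (c : ℝ), y = w + c • v ∧ w ⬝ᵥ v = 0 := by
    intro y
    have hgoal : (y - ((y ⬝ᵥ v)/nv) • v) ⬝ᵥ v = 0 := by
      rw [sub_dotProduct, smul_dotProduct, smul_eq_mul, hvvnv,
        div_mul_cancel₀ _ (ne_of_gt hnv0), sub_self]
    exact ⟨y - ((y ⬝ᵥ v)/nv) • v, (y ⬝ᵥ v)/nv, by abel, hgoal⟩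
  have hform : ∀ y : Fin N → ℝ,
      0 ≤ y ⬝ᵥ B.mulVec y ∧ (y ⬝ᵥ B.mulVec y = 0 → ∃ t : ℝ, y = t • v) := by
    intro y
    obtain ⟨w, c, rfl, hwv⟩ := hdec y
    rw [hquad w c hwv]
    by_cases hw : w = 0
    · subst hw
      constructor
      · simp
      · intro _; exact ⟨c, by simp⟩
    · have hlt := hkey w hwv hw
      exact ⟨by linarith, fun h => absurd h (by intro h'; linarith)⟩
  have hdTdot : ∀ (x z : Fin N → ℝ),
      x ⬝ᵥ (Matrix.diagonal b).mulVec z = ((Matrix.diagonal b).mulVec x) ⬝ᵥ z := by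
    intro x z
    rw [Matrix.dotProduct_mulVec, ← Matrix.mulVec_transpose, Matrix.diagonal_transpose]
  have hMx : ∀ x : Fin N → ℝ,
      M.mulVec x = (Matrix.diagonal b).mulVec (B.mulVec ((Matrix.diagonal b).mulVec x)) := by
    intro x
    rw [hBM, ← Matrix.mulVec_mulVec, ← Matrix.mulVec_mulVec]
  have hMform : ∀ x : Fin N → ℝ,
      x ⬝ᵥ M.mulVec x = ((Matrix.diagonal b).mulVec x) ⬝ᵥ B.mulVec ((Matrix.diagonal b).mulVec x) := by
    intro x; rw [hMx, hdTdot]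
  have hΛtentry : ∀ i j, Λt j i = Λt i j := by
    intro i j
    rw [← Matrix.transpose_apply Λt i j, hΛtsym]
  have hBH : B.IsHermitian := by
    show Bᴴ = B
    rw [Matrix.conjTranspose_eq_transpose_of_trivial]
    ext i j
    simp only [Matrix.transpose_apply, hBdef, Matrix.sub_apply, Matrix.smul_apply,
      Matrix.one_apply, Matrix.vecMulVec_apply, smul_eq_mul, hΛtentry i j]
    rw [show (if j = i then (1:ℝ) else 0) = (if i = j then (1:ℝ) else 0) by
      by_cases h : i = j <;> simp [h, Ne.symm]]
    ring_nf
  have hMH : M.IsHermitian := by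
    rw [hBM, show Matrix.diagonal b * B * Matrix.diagonal b
        = (Matrix.diagonal b)ᴴ * B * Matrix.diagonal b by
      rw [Matrix.conjTranspose_eq_transpose_of_trivial, Matrix.diagonal_transpose]]
    exact Matrix.isHermitian_conjTranspose_mul_mul _ hBH
  have hPSD : M.PosSemidef := by
    refine Matrix.posSemidef_iff_dotProduct_mulVec.mpr ⟨hMH, fun x => ?_⟩
    rw [star_trivial, hMform]
    exact (hform _).1
  have hkerM : ∀ x : Fin N → ℝ, M.mulVec x = 0 ↔ ∃ t : ℝ, x = t • r := by
    intro x
    constructor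
    · intro h
      have h0 : x ⬝ᵥ M.mulVec x = 0 := by rw [h, dotProduct_zero]
      rw [hMform] at h0
      obtain ⟨t, ht⟩ := (hform _).2 h0
      refine ⟨t, funext fun i => ?_⟩
      have h1 := congrFun ht i
      simp only [Matrix.mulVec_diagonal, Pi.smul_apply, smul_eq_mul] at h1
      have h2 := congrArg (fun z => a i * z) h1
      rw [← mul_assoc, hab i, one_mul] at h2
      rw [h2, ← mul_assoc, mul_comm (a i) t, mul_assoc, hav i]
      simp
    · rintro ⟨t, rfl⟩
      have hMr : M.mulVec r = 0 := by
        rw [hMx]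
        have h1 : (Matrix.diagonal b).mulVec r = v := funext fun i => by
          simp [Matrix.mulVec_diagonal, hbr i]
        rw [h1]
        have h2 : B.mulVec v = 0 := by
          rw [hBdef, Matrix.sub_mulVec, hΛtv, Matrix.smul_mulVec, Matrix.sub_mulVec,
            Matrix.one_mulVec, Matrix.smul_mulVec, hvmv, hvvnv, smul_smul,
            inv_mul_cancel₀ (ne_of_gt hnv0), one_smul, sub_self, smul_zero, zero_sub, neg_zero]
        rw [h2, Matrix.mulVec_zero]
      rw [Matrix.mulVec_smul, hMr, smul_zero]
  refine ⟨hPSD, ?_, hkerM⟩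
  have hr0 : r ≠ 0 := fun h => (hr ⟨0, hN⟩).ne' (congrFun h ⟨0, hN⟩)
  have hkerlin : LinearMap.ker M.mulVecLin = Submodule.span ℝ {r} := by
    ext x
    simp only [LinearMap.mem_ker, Matrix.mulVecLin_apply, hkerM x,
      Submodule.mem_span_singleton]
    exact exists_congr fun t => eq_comm
  have hrank1 : Module.finrank ℝ (LinearMap.ker M.mulVecLin) = 1 := by
    rw [hkerlin]; exact finrank_span_singleton hr0
  have hrn := M.mulVecLin.finrank_range_add_finrank_ker
  rw [hrank1, Module.finrank_fin_fun] at hrn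
  show Module.finrank ℝ (LinearMap.range M.mulVecLin) = N - 1
  omega
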